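/- Let h > 0, c > 0, and let y be a C¹ solution on (0, R₁] of y'(r) = h^{-4/3}(y(r)² - ψ(r)) with y(R₁) = 0, where ψ is continuous with 0 ≤ ψ(r) ≤ c. Then y(r) ≤ √c · tanh(h^{-4/3}√c(R₁ - r)) for all r ∈ (0, R₁]; in particular 0 ≤ y ≤ √c. -/

import Mathlib

open Real Set Filter

private lemma myHasDerivAt_tanh (x : ℝ) :
    HasDerivAt Real.tanh (1 - Real.tanh x ^ 2) x := by
  have he : Real.tanh = fun t => Real.sinh t / Real.cosh t :=
    funext fun t => Real.tanh_eq_sinh_div_cosh t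
  have h : HasDerivAt (fun t => Real.sinh t / Real.cosh t)
      ((Real.cosh x * Real.cosh x - Real.sinh x * Real.sinh x) / Real.cosh x ^ 2) x :=
    (Real.hasDerivAt_sinh x).div (Real.hasDerivAt_cosh x) (Real.cosh_pos x).ne'
  rw [he]
  convert h using 1
  have hc := Real.cosh_pos x
  have hs := Real.cosh_sq_sub_sinh_sq x
  field_simp

private lemma myContinuous_tanh : Continuous Real.tanh := by
  have he : Real.tanh = fun t => Real.sinh t / Real.cosh t :=
    funext fun t => Real.tanh_eq_sinh_div_cosh t
  rw [he]
  exact Real.continuous_sinh.div Real.continuous_cosh fun x => (Real.cosh_pos x).ne'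

private lemma myTanh_le_one (x : ℝ) : Real.tanh x ≤ 1 := by
  rw [Real.tanh_eq_sinh_div_cosh]
  exact le_of_lt ((div_lt_one (Real.cosh_pos x)).mpr (Real.sinh_lt_cosh x))

theorem stmt_7 (h c R₁ : ℝ) (hh : 0 < h) (hc : 0 < c) (hR₁ : 0 < R₁)
    (ψ : ℝ → ℝ) (hψcont : ContinuousOn ψ (Set.Ioc 0 R₁))
    (hψ : ∀ r ∈ Set.Ioc (0 : ℝ) R₁, 0 ≤ ψ r ∧ ψ r ≤ c)
    (y : ℝ → ℝ) (hy : ContDiffOn ℝ 1 y (Set.Ioc 0 R₁))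
    (hode : ∀ r ∈ Set.Ioc (0 : ℝ) R₁,
      HasDerivWithinAt y (h ^ (-(4 : ℝ) / 3) * ((y r) ^ 2 - ψ r)) (Set.Ioc 0 R₁) r)
    (hinit : y R₁ = 0) :
    ∀ r ∈ Set.Ioc (0 : ℝ) R₁,
      y r ≤ Real.sqrt c * Real.tanh (h ^ (-(4 : ℝ) / 3) * Real.sqrt c * (R₁ - r)) ∧
      0 ≤ y r ∧ y r ≤ Real.sqrt c := by
  intro r₀ hr₀mem
  obtain ⟨hr₀pos, hr₀le⟩ := hr₀mem
  set K := h ^ (-(4 : ℝ) / 3) with hKdef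
  have hK : 0 < K := Real.rpow_pos_of_pos hh _
  set s₀ := R₁ - r₀ with hs₀def
  have hs₀0 : 0 ≤ s₀ := by simp only [hs₀def]; linarith
  have hs₀R : s₀ < R₁ := by simp only [hs₀def]; linarith
  set F : ℝ → ℝ := fun s => y (R₁ - s) with hFdef
  set Fd : ℝ → ℝ := fun s => K * (ψ (R₁ - s) - (F s) ^ 2) with hFddef
  have hmemI : ∀ x ∈ Icc (0 : ℝ) s₀, R₁ - x ∈ Ioc 0 R₁ := by
    intro x hx
    exact ⟨by linarith [hx.2], by linarith [hx.1]⟩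
  have hF0 : F 0 = 0 := by simp [hFdef, hinit]
  -- continuity of F on [0, s₀]
  have hFcont : ContinuousOn F (Icc 0 s₀) := by
    have hyc : ContinuousOn y (Ioc 0 R₁) := hy.continuousOn
    exact hyc.comp ((continuous_const.sub continuous_id).continuousOn) hmemI
  -- right derivative of F
  have hFderiv : ∀ x ∈ Ico (0 : ℝ) s₀, HasDerivWithinAt F (Fd x) (Ici x) x := by
    intro x hx
    have hr : R₁ - x ∈ Ioc 0 R₁ := ⟨by linarith [hx.2], by linarith [hx.1]⟩
    have hyd := hode (R₁ - x) hr
    have hg0 : HasDerivAt (fun s : ℝ => R₁ - s) (-1) x := (hasDerivAt_id x).const_sub R₁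
    have hg : HasDerivWithinAt (fun s : ℝ => R₁ - s) (-1) (Ico 0 R₁) x :=
      hg0.hasDerivWithinAt
    have hmaps : MapsTo (fun s : ℝ => R₁ - s) (Ico 0 R₁) (Ioc 0 R₁) := by
      intro s hs
      refine ⟨?_, ?_⟩
      · show 0 < R₁ - s; linarith [hs.2]
      · show R₁ - s ≤ R₁; linarith [hs.1]
    have hcomp := HasDerivWithinAt.comp x hyd hg hmaps
    have hnhds : Ico (0 : ℝ) R₁ ∈ nhdsWithin x (Ici x) := by
      rw [mem_nhdsWithin]
      exact ⟨Iio R₁, isOpen_Iio, by exact lt_trans hx.2 hs₀R,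
        fun z hz => ⟨le_trans hx.1 hz.2, hz.1⟩⟩
    have hfinal := hcomp.mono_of_mem_nhdsWithin hnhds
    have heq : K * (y (R₁ - x) ^ 2 - ψ (R₁ - x)) * (-1) = Fd x := by
      simp only [hFddef, hFdef]; ring
    rw [heq] at hfinal
    exact hfinal
  -- upper barrier comparison with parameter ε
  have upper : ∀ ε : ℝ, 0 < ε →
      y r₀ ≤ Real.sqrt (c + ε) * Real.tanh (K * Real.sqrt (c + ε) * s₀) := by
    intro ε hε
    set a := Real.sqrt (c + ε) with hadef
    have ha : 0 < a := Real.sqrt_pos.mpr (by linarith)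
    have ha2 : a ^ 2 = c + ε := Real.sq_sqrt (by linarith)
    set Z : ℝ → ℝ := fun s => a * Real.tanh (K * a * s) with hZdef
    set Zd : ℝ → ℝ := fun s => K * ((c + ε) - (Z s) ^ 2) with hZddef
    have hZderiv : ∀ x : ℝ, HasDerivAt Z (Zd x) x := by
      intro x
      have h1 : HasDerivAt (fun s : ℝ => K * a * s) (K * a) x := by
        simpa using (hasDerivAt_id x).const_mul (K * a)
      have h2 := (myHasDerivAt_tanh (K * a * x)).comp x h1
      have h3 := h2.const_mul a
      have heq : a * ((1 - Real.tanh (K * a * x) ^ 2) * (K * a)) = Zd x := by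
        simp only [hZddef, hZdef]
        nlinarith [ha2]
      rw [heq] at h3
      exact h3
    have haF : F 0 ≤ Z 0 := by
      simp [hF0, hZdef, Real.tanh_zero]
    have hbound : ∀ x ∈ Ico (0 : ℝ) s₀, F x = Z x → Fd x < Zd x := by
      intro x hx hFZ
      have hr : R₁ - x ∈ Ioc 0 R₁ := ⟨by linarith [hx.2], by linarith [hx.1]⟩
      have hψ2 := (hψ (R₁ - x) hr).2
      simp only [hFddef, hZddef, hFZ]
      nlinarith [hK, hε]
    have hres := image_le_of_deriv_right_lt_deriv_boundary hFcont hFderiv haF hZderiv hbound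
      (right_mem_Icc.mpr hs₀0)
    have : F s₀ = y r₀ := by simp [hFdef, hs₀def]
    rw [this] at hres
    exact hres
  -- pass to the limit ε → 0⁺
  have hmain : y r₀ ≤ Real.sqrt c * Real.tanh (K * Real.sqrt c * s₀) := by
    have hcont : Continuous fun ε : ℝ =>
        Real.sqrt (c + ε) * Real.tanh (K * Real.sqrt (c + ε) * s₀) := by
      apply Continuous.mul
      · exact Real.continuous_sqrt.comp (continuous_const.add continuous_id)
      · exact myContinuous_tanh.comp
          (((continuous_const.mul (Real.continuous_sqrt.comp
            (continuous_const.add continuous_id))).mul continuous_const))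
    have htend : Tendsto (fun ε : ℝ =>
        Real.sqrt (c + ε) * Real.tanh (K * Real.sqrt (c + ε) * s₀)) (nhdsWithin 0 (Ioi 0))
        (nhds (Real.sqrt c * Real.tanh (K * Real.sqrt c * s₀))) := by
      have h0 : Tendsto (fun ε : ℝ =>
          Real.sqrt (c + ε) * Real.tanh (K * Real.sqrt (c + ε) * s₀)) (nhdsWithin 0 (Ioi 0))
          (nhds (Real.sqrt (c + 0) * Real.tanh (K * Real.sqrt (c + 0) * s₀))) :=
        (hcont.tendsto 0).mono_left nhdsWithin_le_nhds
      simpa using h0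
    exact ge_of_tendsto htend (eventually_nhdsWithin_of_forall fun ε hε => upper ε hε)
  -- lower bound: y r₀ ≥ 0 via lower barrier -ε s
  have hδ : 0 < 1 / (K * (R₁ ^ 2 + 1)) := by positivity
  have lower : ∀ ε : ℝ, 0 < ε → ε < 1 / (K * (R₁ ^ 2 + 1)) → -(ε * s₀) ≤ F s₀ := by
    intro ε hε hεδ
    have hεK : K * ε * R₁ ^ 2 < 1 := by
      rw [div_eq_inv_mul] at hεδ
      have h1 : ε * (K * (R₁ ^ 2 + 1)) < 1 := by
        rw [lt_inv_mul_iff₀ (by positivity)] at hεδ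
        linarith [hεδ]
      nlinarith [hε, hK]
    have hfderiv : ∀ x ∈ Ico (0 : ℝ) s₀,
        HasDerivWithinAt (fun s : ℝ => -(ε * s)) (-ε) (Ici x) x := by
      intro x _
      have : HasDerivAt (fun s : ℝ => -(ε * s)) (-ε) x := by
        simpa using (hasDerivAt_id x).const_mul (-ε)
      exact this.hasDerivWithinAt
    have hfc : ContinuousOn (fun s : ℝ => -(ε * s)) (Icc 0 s₀) :=
      ((continuous_const.mul continuous_id).neg).continuousOn
    have ha0 : -(ε * (0 : ℝ)) ≤ F 0 := by simp [hF0]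
    have hbound : ∀ x ∈ Ico (0 : ℝ) s₀, -(ε * x) = F x → -ε < Fd x := by
      intro x hx hFB
      have hr : R₁ - x ∈ Ioc 0 R₁ := ⟨by linarith [hx.2], by linarith [hx.1]⟩
      have hψ1 := (hψ (R₁ - x) hr).1
      have hx2 : x ^ 2 ≤ R₁ ^ 2 := by nlinarith [hx.1, hx.2, hs₀R]
      simp only [hFddef, ← hFB]
      nlinarith [mul_nonneg hK.le hψ1,
        mul_le_mul_of_nonneg_left hx2 (mul_nonneg hK.le (sq_nonneg ε)),
        mul_lt_mul_of_pos_right hεK hε]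
    have hres := image_le_of_deriv_right_lt_deriv_boundary' hfc hfderiv ha0 hFcont hFderiv
      hbound (right_mem_Icc.mpr hs₀0)
    exact hres
  have hy0 : 0 ≤ y r₀ := by
    have hFy : F s₀ = y r₀ := by simp [hFdef, hs₀def]
    have htend : Tendsto (fun ε : ℝ => -(ε * s₀)) (nhdsWithin 0 (Ioi 0)) (nhds 0) := by
      have h0 : Tendsto (fun ε : ℝ => -(ε * s₀)) (nhds 0) (nhds (-(0 * s₀))) :=
        ((continuous_id.mul continuous_const).neg).tendsto 0
      simp only [zero_mul, neg_zero] at h0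
      exact h0.mono_left nhdsWithin_le_nhds
    have hev : ∀ᶠ ε in nhdsWithin (0 : ℝ) (Ioi 0), -(ε * s₀) ≤ F s₀ := by
      filter_upwards [Ioo_mem_nhdsGT_of_mem (Set.mem_Ico.mpr ⟨le_refl 0, hδ⟩)] with ε hε
      exact lower ε hε.1 hε.2
    have := le_of_tendsto htend hev
    rwa [hFy] at this
  refine ⟨hmain, hy0, ?_⟩
  have h1 : Real.tanh (K * Real.sqrt c * s₀) ≤ 1 := myTanh_le_one _
  calc y r₀ ≤ Real.sqrt c * Real.tanh (K * Real.sqrt c * s₀) := hmain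
    _ ≤ Real.sqrt c * 1 := mul_le_mul_of_nonneg_left h1 (Real.sqrt_nonneg c)
    _ = Real.sqrt c := mul_one _
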